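/- Let A, B be m×m complex matrices, M, K be n×n complex matrices, τ a real number, and α, β, ω real numbers with α + β ≠ 0 and ω ≠ 2. Define P(α,β,ω) = (2/((α+β)(2−ω)))·(A+αB)⊗(τK+βM) and R(α,β,ω) = (2/((α+β)(2−ω)))·[(A−βB)⊗(τK−αM) + ((α+β)ω/2)·(A+αB)⊗M + ((α+β)ω/2)·B⊗(τK−αM)]. Then P(α,β,ω) − R(α,β,ω) = A⊗M + τ·B⊗K. -/

import Mathlib

open Matrix Kronecker

/-- The MSKP preconditioner
`P(α,β,ω) = (2/((α+β)(2−ω)))·(A+αB)⊗(τK+βM)`. -/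
noncomputable def mskpP {m n : ℕ} (A B : Matrix (Fin m) (Fin m) ℂ)
    (M K : Matrix (Fin n) (Fin n) ℂ) (τ α β ω : ℝ) :
    Matrix (Fin m × Fin n) (Fin m × Fin n) ℂ :=
  ((2 / ((α + β) * (2 - ω)) : ℝ) : ℂ) •
    ((A + (α : ℂ) • B) ⊗ₖ ((τ : ℂ) • K + (β : ℂ) • M))

/-- The matrix `R(α,β,ω)` in the MSKP splitting `Q = P(α,β,ω) − R(α,β,ω)`. -/
noncomputable def mskpR {m n : ℕ} (A B : Matrix (Fin m) (Fin m) ℂ)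
    (M K : Matrix (Fin n) (Fin n) ℂ) (τ α β ω : ℝ) :
    Matrix (Fin m × Fin n) (Fin m × Fin n) ℂ :=
  ((2 / ((α + β) * (2 - ω)) : ℝ) : ℂ) •
    ((A - (β : ℂ) • B) ⊗ₖ ((τ : ℂ) • K - (α : ℂ) • M)
      + (((α + β) * ω / 2 : ℝ) : ℂ) • ((A + (α : ℂ) • B) ⊗ₖ M)
      + (((α + β) * ω / 2 : ℝ) : ℂ) • (B ⊗ₖ ((τ : ℂ) • K - (α : ℂ) • M)))

lemma mskp_key (x u y v α β ω τ : ℂ) (hd : (α + β) * (2 - ω) ≠ 0) :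
    2 / ((α + β) * (2 - ω)) * ((x + α * u) * (τ * v + β * y))
      - 2 / ((α + β) * (2 - ω)) *
        ((x - β * u) * (τ * v - α * y)
          + (α + β) * ω / 2 * ((x + α * u) * y)
          + (α + β) * ω / 2 * (u * (τ * v - α * y)))
      = x * y + τ * (u * v) := by
  rw [div_mul_eq_mul_div, div_mul_eq_mul_div, div_sub_div_same, div_eq_iff hd]
  ring

/-- The MSKP splitting: `P(α,β,ω) − R(α,β,ω) = Q = A⊗M + τ·B⊗K`. -/
theorem mskp_splitting {m n : ℕ} (A B : Matrix (Fin m) (Fin m) ℂ)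
    (M K : Matrix (Fin n) (Fin n) ℂ) (τ α β ω : ℝ)
    (hαβ : α + β ≠ 0) (hω : ω ≠ 2) :
    mskpP A B M K τ α β ω - mskpR A B M K τ α β ω
      = A ⊗ₖ M + (τ : ℂ) • (B ⊗ₖ K) := by
  have h1 : ((α : ℂ) + β) ≠ 0 := by exact_mod_cast hαβ
  have h2 : ((2 : ℂ) - ω) ≠ 0 := by
    have : (2 : ℝ) - ω ≠ 0 := sub_ne_zero.mpr (Ne.symm hω)
    exact_mod_cast this
  have hd : ((α : ℂ) + β) * (2 - ω) ≠ 0 := mul_ne_zero h1 h2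
  ext ⟨i, j⟩ ⟨k, l⟩
  simp only [mskpP, mskpR, Matrix.sub_apply, Matrix.add_apply, Matrix.smul_apply, kroneckerMap_apply,
    smul_eq_mul]
  push_cast
  have := mskp_key (A i k) (B i k) (M j l) (K j l) (α : ℂ) (β : ℂ) (ω : ℂ) (τ : ℂ) hd
  linear_combination this
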